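/- For every integer n ≥ 2 and every spanner S ∈ X of the graph G_n, letting T = { i ∈ {1,…,n} : {v_i, w_i} ∈ S }, one has f1(S) = Σ_{i ∈ T} 2^i and f2(S) = (n − 1) + Σ_{i ∈ T} 2^i + Σ_{i ∈ {1,…,n} \ T} 2^{i+1}. -/

import Mathlib

namespace MSpPaper

open SimpleGraph

variable {V : Type*}

/-- Minimum total `c2`-weight of a walk from `u` to `v` using only edges in `F`
(the set of weights of such walks is a set of naturals; its infimum is `0` when no walk exists). -/
noncomputable def wdist (F : Set (Sym2 V)) (c2 : Sym2 V → ℕ) (u v : V) : ℕ :=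
  sInf (Set.range fun p : (SimpleGraph.fromEdgeSet F).Walk u v => (p.edges.map c2).sum)

/-- `S` is a spanner of `G`: a subset of the edges such that the resulting subgraph is connected. -/
def IsSpanner (G : SimpleGraph V) (S : Set (Sym2 V)) : Prop :=
  S ⊆ G.edgeSet ∧ (SimpleGraph.fromEdgeSet S).Connected

/-- First objective: total `c1`-cost of the spanner. -/
def f1 (c1 : Sym2 V → ℤ) (S : Finset (Sym2 V)) : ℤ := ∑ e ∈ S, c1 e

open scoped Classical in
/-- Second objective (stretch factor): maximum over pairs of distinct vertices of the
distance ratio `d^S(u,v)/d^E(u,v)` (junk value `0` if there is no pair of distinct vertices). -/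
noncomputable def f2 [Fintype V] (E S : Set (Sym2 V)) (c2 : Sym2 V → ℕ) : ℚ :=
  if h : ((Finset.univ : Finset (V × V)).filter fun p => p.1 ≠ p.2).Nonempty then
    ((Finset.univ : Finset (V × V)).filter fun p => p.1 ≠ p.2).sup' h
      (fun p => (wdist S c2 p.1 p.2 : ℚ) / (wdist E c2 p.1 p.2 : ℚ))
  else 0

/-- The value vector of a spanner. -/
noncomputable def valueVec [Fintype V] (G : SimpleGraph V) (c1 : Sym2 V → ℤ) (c2 : Sym2 V → ℕ)
    (S : Finset (Sym2 V)) : ℚ × ℚ :=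
  ((f1 c1 S : ℚ), f2 G.edgeSet (↑S) c2)

/-- `y'` dominates `y`: componentwise `≤` and unequal. -/
def Dominates (y' y : ℚ × ℚ) : Prop := y' ≤ y ∧ y' ≠ y

/-- The non-dominated set of an MSp instance. -/
def YN [Fintype V] (G : SimpleGraph V) (c1 : Sym2 V → ℤ) (c2 : Sym2 V → ℕ) : Set (ℚ × ℚ) :=
  {y | (∃ S : Finset (Sym2 V), IsSpanner G (↑S) ∧ valueVec G c1 c2 S = y) ∧
       ∀ S' : Finset (Sym2 V), IsSpanner G (↑S') → ¬ Dominates (valueVec G c1 c2 S') y}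


/-! ### The family of instances `G_n` from Section 3 -/

/-- Vertices of `G_n`: for each `i`, the vertex `(i,0)` is `v_i`, `(i,1)` is `v_i'`,
and `(i,2)` is `w_i`. -/
abbrev Vtx (n : ℕ) := Fin n × Fin 3

/-- The weights `(c1, c2)` of the (ordered) pair `a b` of vertices of `G_n`;
`(0, 0)` (in particular `c2 = 0`) marks non-edges. -/
def wtG (n : ℕ) (a b : Vtx n) : ℤ × ℕ :=
  if a.2 = 0 ∧ b.2 = 2 ∧ a.1 = b.1 then (2 ^ ((a.1 : ℕ) + 1), 2 ^ ((a.1 : ℕ) + 1))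
  else if a.2 = 0 ∧ b.2 = 1 ∧ a.1 = b.1 then (0, 2 ^ ((a.1 : ℕ) + 1))
  else if a.2 = 1 ∧ b.2 = 2 ∧ a.1 = b.1 then (0, 2 ^ ((a.1 : ℕ) + 1))
  else if a.2 = 2 ∧ b.2 = 0 ∧ (b.1 : ℕ) = (a.1 : ℕ) + 1 then (0, 1)
  else if a.2 = 0 ∧ b.2 = 2 ∧ (a.1 : ℕ) = 0 ∧ (b.1 : ℕ) = n - 1 then (2 ^ (n + 1), 1)
  else (0, 0)

/-- The cost function `c1` of `G_n`. -/
def c1G (n : ℕ) : Sym2 (Vtx n) → ℤ :=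
  Sym2.lift ⟨fun a b => (wtG n a b).1 + (wtG n b a).1, fun _ _ => add_comm _ _⟩

/-- The length function `c2` of `G_n`. -/
def c2G (n : ℕ) : Sym2 (Vtx n) → ℕ :=
  Sym2.lift ⟨fun a b => (wtG n a b).2 + (wtG n b a).2, fun _ _ => add_comm _ _⟩

/-- The edge set of `G_n`: exactly the pairs with positive length. -/
def EG (n : ℕ) : Set (Sym2 (Vtx n)) := {e | c2G n e ≠ 0}

/-- The graph `G_n`. -/
def Gn (n : ℕ) : SimpleGraph (Vtx n) := SimpleGraph.fromEdgeSet (EG n)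

/-- The vertex `v_i`. -/
def vG (n : ℕ) (i : Fin n) : Vtx n := (i, 0)
/-- The vertex `v_i'`. -/
def pG (n : ℕ) (i : Fin n) : Vtx n := (i, 1)
/-- The vertex `w_i`. -/
def wG (n : ℕ) (i : Fin n) : Vtx n := (i, 2)
/-- The vertex `s = v_1`. -/
def sG (n : ℕ) (hn : 0 < n) : Vtx n := (⟨0, hn⟩, 0)
/-- The vertex `t = w_n`. -/
def tG (n : ℕ) (hn : 0 < n) : Vtx n := (⟨n - 1, Nat.sub_lt hn one_pos⟩, 2)

/-- Membership in `X`: spanners of `G_n` containing every edge of zero `c1`-cost and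
not containing the edge `{s, t}`. -/
def memX (n : ℕ) (hn : 0 < n) (S : Finset (Sym2 (Vtx n))) : Prop :=
  IsSpanner (Gn n) (↑S) ∧ (∀ e ∈ (Gn n).edgeSet, c1G n e = 0 → e ∈ S) ∧
    s(sG n hn, tG n hn) ∉ S


section Helpers

lemma npos0 {n : ℕ} (hn : 2 ≤ n) : 0 < n := by omega

lemma c2_mk (n : ℕ) (a b : Vtx n) : c2G n s(a,b) = (wtG n a b).2 + (wtG n b a).2 := rfl
lemma c1_mk (n : ℕ) (a b : Vtx n) : c1G n s(a,b) = (wtG n a b).1 + (wtG n b a).1 := rfl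

lemma c2_vw (n : ℕ) (i : Fin n) : c2G n s(vG n i, wG n i) = 2^((i:ℕ)+1) := by
  rw [c2_mk]; simp [wtG, vG, wG]
lemma c1_vw (n : ℕ) (i : Fin n) : c1G n s(vG n i, wG n i) = 2^((i:ℕ)+1) := by
  rw [c1_mk]; simp [wtG, vG, wG]
lemma c2_vp (n : ℕ) (i : Fin n) : c2G n s(vG n i, pG n i) = 2^((i:ℕ)+1) := by
  rw [c2_mk]; simp [wtG, vG, pG]
lemma c1_vp (n : ℕ) (i : Fin n) : c1G n s(vG n i, pG n i) = 0 := by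
  rw [c1_mk]; simp [wtG, vG, pG]
lemma c2_pw (n : ℕ) (i : Fin n) : c2G n s(pG n i, wG n i) = 2^((i:ℕ)+1) := by
  rw [c2_mk]; simp [wtG, pG, wG]
lemma c1_pw (n : ℕ) (i : Fin n) : c1G n s(pG n i, wG n i) = 0 := by
  rw [c1_mk]; simp [wtG, pG, wG]
lemma c2_h (n : ℕ) (i : Fin n) (hi : (i:ℕ)+1 < n) :
    c2G n s(wG n i, vG n ⟨(i:ℕ)+1, hi⟩) = 1 := by
  rw [c2_mk]; simp [wtG, vG, wG, Fin.ext_iff]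
lemma c1_h (n : ℕ) (i : Fin n) (hi : (i:ℕ)+1 < n) :
    c1G n s(wG n i, vG n ⟨(i:ℕ)+1, hi⟩) = 0 := by
  rw [c1_mk]; simp [wtG, vG, wG, Fin.ext_iff]
lemma c2_st (n : ℕ) (hn : 2 ≤ n) :
    c2G n s(sG n (npos0 hn), tG n (npos0 hn)) = 1 := by
  rw [c2_mk]; simp [wtG, sG, tG, Fin.ext_iff]
  split_ifs <;> omega
lemma c1_st (n : ℕ) (hn : 2 ≤ n) :
    c1G n s(sG n (npos0 hn), tG n (npos0 hn)) = 2^(n+1) := by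
  rw [c1_mk]; simp [wtG, sG, tG, Fin.ext_iff]
  split_ifs <;> omega

lemma classify (n : ℕ) (hn : 2 ≤ n) (x y : Vtx n) (h : c2G n s(x,y) ≠ 0) :
    (∃ i, s(x,y) = s(vG n i, wG n i)) ∨
    (∃ i, s(x,y) = s(vG n i, pG n i)) ∨
    (∃ i, s(x,y) = s(pG n i, wG n i)) ∨
    (∃ (i : Fin n) (hi : (i:ℕ)+1 < n), s(x,y) = s(wG n i, vG n ⟨(i:ℕ)+1, hi⟩)) ∨
    s(x,y) = s(sG n (npos0 hn), tG n (npos0 hn)) := by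
  obtain ⟨i, a⟩ := x; obtain ⟨j, b⟩ := y
  rw [c2_mk] at h
  have hi2 := i.isLt; have hj2 := j.isLt
  fin_cases a <;> fin_cases b <;> simp [wtG] at h
  -- (0,1)
  · split_ifs at h with h1
    · exact Or.inr (Or.inl ⟨i, by subst h1; rfl⟩)
    · simp at h
  -- (0,2)
  · split_ifs at h with h1 h2 h3 h4 h5
    all_goals first
      | (exact Or.inl ⟨i, by subst h1; rfl⟩)
      | (exact Or.inr (Or.inr (Or.inr (Or.inr (by
          simp [sG, tG, Sym2.eq_iff, Prod.ext_iff, Fin.ext_iff]; omega)))))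
      | (refine Or.inr (Or.inr (Or.inr (Or.inl ⟨j, by omega, ?_⟩)));
          simp [vG, wG, Sym2.eq_iff, Prod.ext_iff, Fin.ext_iff]; omega)
      | simp_all
      | omega
  -- (1,0)
  · split_ifs at h with h1
    · exact Or.inr (Or.inl ⟨j, by subst h1; exact Sym2.eq_swap⟩)
    · simp at h
  -- (1,2)
  · split_ifs at h with h1
    · exact Or.inr (Or.inr (Or.inl ⟨i, by subst h1; rfl⟩))
    · simp at h
  -- (2,0)
  · split_ifs at h with h1 h2 h3 h4 h5
    all_goals first
      | (refine Or.inr (Or.inr (Or.inr (Or.inl ⟨i, by omega, ?_⟩)));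
          simp [vG, wG, Sym2.eq_iff, Prod.ext_iff, Fin.ext_iff]; omega)
      | (exact Or.inl ⟨j, by
          simp [vG, wG, Sym2.eq_iff, Prod.ext_iff, Fin.ext_iff]; omega⟩)
      | (exact Or.inr (Or.inr (Or.inr (Or.inr (by
          simp [sG, tG, Sym2.eq_iff, Prod.ext_iff, Fin.ext_iff]; omega)))))
      | simp_all
      | omega
  -- (2,1)
  · split_ifs at h with h1
    · exact Or.inr (Or.inr (Or.inl ⟨j, by subst h1; exact Sym2.eq_swap⟩))
    · simp at h


/-! infra -/

def trm (n : ℕ) (S : Finset (Sym2 (Vtx n))) (i : Fin n) : ℕ :=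
  if s(vG n i, wG n i) ∈ S then 2^((i:ℕ)+1) else 2^((i:ℕ)+2)

def Dval (n : ℕ) (S : Finset (Sym2 (Vtx n))) : ℕ := (n-1) + ∑ i, trm n S i

lemma trm_ge (n : ℕ) (S : Finset (Sym2 (Vtx n))) (i : Fin n) :
    2^((i:ℕ)+1) ≤ trm n S i := by
  unfold trm; split_ifs
  · exact le_refl _
  · exact Nat.pow_le_pow_right (by norm_num) (by omega)

def Pf (n : ℕ) (S : Finset (Sym2 (Vtx n))) (m : ℕ) : ℤ :=
  m + ∑ j ∈ Finset.univ.filter (fun j : Fin n => (j:ℕ) < m), (trm n S j : ℤ)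

def phi (n : ℕ) (S : Finset (Sym2 (Vtx n))) (x : Vtx n) : ℤ :=
  Pf n S (x.1:ℕ) +
    (if x.2 = 1 then 2^((x.1:ℕ)+1) else if x.2 = 2 then (trm n S x.1 : ℤ) else 0)

lemma filter_succ (n : ℕ) (i : Fin n) :
    Finset.univ.filter (fun j : Fin n => (j:ℕ) < (i:ℕ)+1) =
      insert i (Finset.univ.filter (fun j : Fin n => (j:ℕ) < (i:ℕ))) := by
  ext j; simp [Fin.ext_iff]; omega

lemma Pf_succ (n : ℕ) (S : Finset (Sym2 (Vtx n))) (i : Fin n) :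
    Pf n S ((i:ℕ)+1) = Pf n S i + trm n S i + 1 := by
  unfold Pf; rw [filter_succ, Finset.sum_insert (by simp)]; push_cast; ring

lemma filter_top (n : ℕ) (hn : 0 < n) :
    insert (⟨n-1, by omega⟩ : Fin n) (Finset.univ.filter (fun j : Fin n => (j:ℕ) < n-1)) =
      Finset.univ := by
  ext j; have := j.isLt; simp [Fin.ext_iff]; omega

lemma Pf_last (n : ℕ) (hn : 0 < n) (S : Finset (Sym2 (Vtx n))) :
    Pf n S (n-1) + trm n S ⟨n-1, by omega⟩ = Dval n S := by
  have h1 : (∑ j ∈ insert (⟨n-1, by omega⟩ : Fin n)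
      (Finset.univ.filter (fun j : Fin n => (j:ℕ) < n-1)), trm n S j) = ∑ i, trm n S i := by
    rw [filter_top n hn]
  rw [Finset.sum_insert (by simp)] at h1
  unfold Pf Dval
  rw [← h1]
  push_cast; ring


lemma trm_le (n : ℕ) (S : Finset (Sym2 (Vtx n))) (i : Fin n) :
    trm n S i ≤ 2^((i:ℕ)+2) := by
  unfold trm; split_ifs
  · exact Nat.pow_le_pow_right (by norm_num) (by omega)
  · exact le_refl _

lemma phi_v (n : ℕ) (S : Finset (Sym2 (Vtx n))) (i : Fin n) :
    phi n S (vG n i) = Pf n S (i:ℕ) := by simp [phi, vG]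
lemma phi_p (n : ℕ) (S : Finset (Sym2 (Vtx n))) (i : Fin n) :
    phi n S (pG n i) = Pf n S (i:ℕ) + 2^((i:ℕ)+1) := by simp [phi, pG]
lemma phi_w (n : ℕ) (S : Finset (Sym2 (Vtx n))) (i : Fin n) :
    phi n S (wG n i) = Pf n S (i:ℕ) + trm n S i := by simp [phi, wG]

lemma mem_GnE (n : ℕ) {x y : Vtx n} (hne : x ≠ y) (hc2 : c2G n s(x,y) ≠ 0) :
    s(x,y) ∈ (Gn n).edgeSet := by
  rw [Gn, edgeSet_fromEdgeSet]
  exact ⟨hc2, by simp [hne]⟩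

lemma GnE_sub (n : ℕ) : ∀ e ∈ (Gn n).edgeSet, c2G n e ≠ 0 := by
  intro e he
  rw [Gn, edgeSet_fromEdgeSet] at he
  exact he.1

lemma ne_vw (n : ℕ) (i : Fin n) : vG n i ≠ wG n i := by simp [vG, wG]
lemma ne_vp (n : ℕ) (i : Fin n) : vG n i ≠ pG n i := by simp [vG, pG]
lemma ne_pw (n : ℕ) (i : Fin n) : pG n i ≠ wG n i := by simp [pG, wG]
lemma ne_h (n : ℕ) (i : Fin n) (hi : (i:ℕ)+1 < n) : wG n i ≠ vG n ⟨(i:ℕ)+1, hi⟩ := by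
  simp [vG, wG]
lemma ne_st (n : ℕ) (hn : 2 ≤ n) : sG n (npos0 hn) ≠ tG n (npos0 hn) := by
  simp [sG, tG]

section WithS
variable {n : ℕ} (hn : 2 ≤ n) {S : Finset (Sym2 (Vtx n))} (hS : memX n (npos0 hn) S)
include hn hS

lemma vp_mem (i : Fin n) : s(vG n i, pG n i) ∈ S :=
  hS.2.1 _ (mem_GnE n (ne_vp n i) (by rw [c2_vp]; positivity)) (c1_vp n i)

lemma pw_mem (i : Fin n) : s(pG n i, wG n i) ∈ S :=
  hS.2.1 _ (mem_GnE n (ne_pw n i) (by rw [c2_pw]; positivity)) (c1_pw n i)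

lemma h_mem (i : Fin n) (hi : (i:ℕ)+1 < n) : s(wG n i, vG n ⟨(i:ℕ)+1, hi⟩) ∈ S :=
  hS.2.1 _ (mem_GnE n (ne_h n i hi) (by rw [c2_h]; omega)) (c1_h n i hi)

lemma phi_edge : ∀ x y : Vtx n, s(x,y) ∈ S →
    |phi n S x - phi n S y| ≤ (c2G n s(x,y) : ℤ) := by
  have hA : ∀ i : Fin n, s(vG n i, wG n i) ∈ S →
      |phi n S (vG n i) - phi n S (wG n i)| ≤ (c2G n s(vG n i, wG n i) : ℤ) := by
    intro i hi
    have ht : trm n S i = 2^((i:ℕ)+1) := if_pos hi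
    rw [phi_v, phi_w, c2_vw, ht]
    rw [abs_le]; push_cast
    constructor <;> nlinarith [pow_pos (show (0:ℚ) < 2 by norm_num) ((i:ℕ)+1)]
  have hB : ∀ i : Fin n,
      |phi n S (vG n i) - phi n S (pG n i)| ≤ (c2G n s(vG n i, pG n i) : ℤ) := by
    intro i
    rw [phi_v, phi_p, c2_vp, abs_le]; push_cast
    have : (0:ℤ) ≤ 2^((i:ℕ)+1) := by positivity
    constructor <;> linarith
  have hC : ∀ i : Fin n,
      |phi n S (pG n i) - phi n S (wG n i)| ≤ (c2G n s(pG n i, wG n i) : ℤ) := by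
    intro i
    rw [phi_p, phi_w, c2_pw, abs_le]
    have h1 : (2^((i:ℕ)+1) : ℤ) ≤ (trm n S i : ℤ) := by exact_mod_cast trm_ge n S i
    have h2 : ((trm n S i : ℤ)) ≤ 2^((i:ℕ)+2) := by exact_mod_cast trm_le n S i
    have h3 : (2^((i:ℕ)+2) : ℤ) = 2 * 2^((i:ℕ)+1) := by ring
    push_cast
    constructor <;> linarith
  have hD : ∀ (i : Fin n) (hi : (i:ℕ)+1 < n),
      |phi n S (wG n i) - phi n S (vG n ⟨(i:ℕ)+1, hi⟩)| ≤
        (c2G n s(wG n i, vG n ⟨(i:ℕ)+1, hi⟩) : ℤ) := by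
    intro i hi
    rw [phi_w, c2_h n i hi]
    have hv : phi n S (vG n ⟨(i:ℕ)+1, hi⟩) = Pf n S ((i:ℕ)+1) := phi_v n S _
    rw [hv, Pf_succ, abs_le]; push_cast
    constructor <;> linarith
  intro x y hxy
  have hc2 : c2G n s(x,y) ≠ 0 := GnE_sub n _ (hS.1.1 hxy)
  rcases classify n hn x y hc2 with ⟨i, hi⟩ | ⟨i, hi⟩ | ⟨i, hi⟩ | ⟨i, hlt, hi⟩ | hi <;>
    [skip; skip; skip; skip; skip] <;>
    rw [Sym2.eq_iff] at hi
  · rcases hi with ⟨rfl, rfl⟩ | ⟨rfl, rfl⟩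
    · exact hA i (by rwa [← Sym2.eq_iff.mpr (Or.inl ⟨rfl, rfl⟩)] at hxy)
    · rw [abs_sub_comm, show s(wG n i, vG n i) = s(vG n i, wG n i) from Sym2.eq_swap]
      exact hA i (by rwa [show s(wG n i, vG n i) = s(vG n i, wG n i) from Sym2.eq_swap] at hxy)
  · rcases hi with ⟨rfl, rfl⟩ | ⟨rfl, rfl⟩
    · exact hB i
    · rw [abs_sub_comm, show s(pG n i, vG n i) = s(vG n i, pG n i) from Sym2.eq_swap]
      exact hB i
  · rcases hi with ⟨rfl, rfl⟩ | ⟨rfl, rfl⟩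
    · exact hC i
    · rw [abs_sub_comm, show s(wG n i, pG n i) = s(pG n i, wG n i) from Sym2.eq_swap]
      exact hC i
  · rcases hi with ⟨rfl, rfl⟩ | ⟨rfl, rfl⟩
    · exact hD i hlt
    · rw [abs_sub_comm,
        show s(vG n ⟨(i:ℕ)+1, hlt⟩, wG n i) = s(wG n i, vG n ⟨(i:ℕ)+1, hlt⟩) from Sym2.eq_swap]
      exact hD i hlt
  · rcases hi with ⟨rfl, rfl⟩ | ⟨rfl, rfl⟩
    · exact absurd hxy hS.2.2
    · rw [show s(tG n (npos0 hn), sG n (npos0 hn)) =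
          s(sG n (npos0 hn), tG n (npos0 hn)) from Sym2.eq_swap] at hxy
      exact absurd hxy hS.2.2

end WithS

lemma walk_lb {W : Type*} (F : Set (Sym2 W)) (c2 : Sym2 W → ℕ) (φ : W → ℤ)
    (hφ : ∀ x y : W, s(x,y) ∈ F → |φ x - φ y| ≤ (c2 s(x,y) : ℤ)) {u v : W}
    (p : (SimpleGraph.fromEdgeSet F).Walk u v) :
    |φ u - φ v| ≤ ((p.edges.map c2).sum : ℤ) := by
  induction p with
  | nil => simp
  | @cons a b c h q ih =>
    rw [SimpleGraph.fromEdgeSet_adj] at h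
    have h2 := hφ a b h.1
    calc |φ a - φ c| ≤ |φ a - φ b| + |φ b - φ c| := abs_sub_le _ _ _
      _ ≤ (c2 s(a,b) : ℤ) + ((q.edges.map c2).sum : ℤ) := add_le_add h2 ih
      _ = _ := by rw [Walk.edges_cons, List.map_cons, List.sum_cons]; push_cast; ring

lemma wdist_le_walk {W : Type*} (F : Set (Sym2 W)) (c2 : Sym2 W → ℕ) {u v : W}
    (p : (SimpleGraph.fromEdgeSet F).Walk u v) :
    wdist F c2 u v ≤ (p.edges.map c2).sum :=
  Nat.sInf_le ⟨p, rfl⟩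

lemma wdist_comm {W : Type*} (F : Set (Sym2 W)) (c2 : Sym2 W → ℕ) (u v : W) :
    wdist F c2 u v = wdist F c2 v u := by
  unfold wdist
  congr 1
  ext m
  constructor <;> rintro ⟨p, rfl⟩ <;>
    exact ⟨p.reverse, by simp [List.sum_reverse]⟩

lemma walk_weight_pos {W : Type*} (F : Set (Sym2 W)) (c2 : Sym2 W → ℕ)
    (hF : ∀ e ∈ F, c2 e ≠ 0) {u v : W} (hne : u ≠ v)
    (p : (SimpleGraph.fromEdgeSet F).Walk u v) : 1 ≤ (p.edges.map c2).sum := by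
  cases p with
  | nil => exact absurd rfl hne
  | cons h q =>
    rw [SimpleGraph.fromEdgeSet_adj] at h
    have := hF _ h.1
    rw [Walk.edges_cons, List.map_cons, List.sum_cons]
    omega

section WithS2
variable {n : ℕ} (hn : 2 ≤ n) {S : Finset (Sym2 (Vtx n))} (hS : memX n (npos0 hn) S)
include hn hS

lemma SsubE : ∀ e ∈ (↑S : Set (Sym2 (Vtx n))), c2G n e ≠ 0 :=
  fun e he => GnE_sub n e (hS.1.1 he)

lemma adjS {x y : Vtx n} (h : s(x,y) ∈ S) (hne : x ≠ y) :
    (SimpleGraph.fromEdgeSet (↑S : Set (Sym2 (Vtx n)))).Adj x y := by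
  rw [SimpleGraph.fromEdgeSet_adj]; exact ⟨h, hne⟩

lemma gadget_walk (i : Fin n) :
    ∃ p : (SimpleGraph.fromEdgeSet (↑S : Set (Sym2 (Vtx n)))).Walk (vG n i) (wG n i),
      (p.edges.map (c2G n)).sum = trm n S i := by
  by_cases hmem : s(vG n i, wG n i) ∈ S
  · refine ⟨Walk.cons (adjS hn hS hmem (ne_vw n i)) Walk.nil, ?_⟩
    simp [c2_vw, trm, hmem]
  · refine ⟨Walk.cons (adjS hn hS (vp_mem hn hS i) (ne_vp n i))
      (Walk.cons (adjS hn hS (pw_mem hn hS i) (ne_pw n i)) Walk.nil), ?_⟩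
    simp [c2_vp, c2_pw, trm, hmem]
    ring

lemma spine_v : ∀ (k : ℕ) (hk : k < n),
    ∃ p : (SimpleGraph.fromEdgeSet (↑S : Set (Sym2 (Vtx n)))).Walk
        (sG n (npos0 hn)) (vG n ⟨k, hk⟩),
      (p.edges.map (c2G n)).sum =
        k + ∑ j ∈ Finset.univ.filter (fun j : Fin n => (j:ℕ) < k), trm n S j := by
  intro k
  induction k with
  | zero =>
    intro hk
    refine ⟨Walk.nil, ?_⟩
    simp
    rfl
  | succ k ih =>
    intro hk
    have hk' : k < n := by omega
    obtain ⟨p, hp⟩ := ih hk'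
    obtain ⟨g, hg⟩ := gadget_walk hn hS ⟨k, hk'⟩
    refine ⟨(p.append g).append
      (Walk.cons (adjS hn hS (h_mem hn hS ⟨k, hk'⟩ hk) (ne_h n ⟨k, hk'⟩ hk)) Walk.nil), ?_⟩
    rw [Walk.edges_append, Walk.edges_append, List.map_append, List.map_append,
      List.sum_append, List.sum_append, hp, hg, Walk.edges_cons]
    rw [show (Finset.univ.filter (fun j : Fin n => (j:ℕ) < k+1)) =
        insert (⟨k, hk'⟩ : Fin n) (Finset.univ.filter (fun j : Fin n => (j:ℕ) < k)) from by
      ext j; simp [Fin.ext_iff]; omega,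
      Finset.sum_insert (by simp)]
    simp [c2_h n ⟨k, hk'⟩ hk]
    omega

end WithS2

section WithS3
variable {n : ℕ} (hn : 2 ≤ n) {S : Finset (Sym2 (Vtx n))} (hS : memX n (npos0 hn) S)
include hn hS

lemma sum_ins_le (i : Fin n) :
    (∑ j ∈ Finset.univ.filter (fun j : Fin n => (j:ℕ) < (i:ℕ)), trm n S j) + trm n S i ≤
      ∑ j, trm n S j := by
  rw [add_comm, ← Finset.sum_insert
    (show i ∉ Finset.univ.filter (fun j : Fin n => (j:ℕ) < (i:ℕ)) by simp)]
  exact Finset.sum_le_sum_of_subset (Finset.subset_univ _)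

lemma reach (u : Vtx n) :
    ∃ p : (SimpleGraph.fromEdgeSet (↑S : Set (Sym2 (Vtx n)))).Walk (sG n (npos0 hn)) u,
      (p.edges.map (c2G n)).sum ≤ Dval n S := by
  obtain ⟨i, a⟩ := u
  have hi := i.isLt
  have hsub : (∑ j ∈ Finset.univ.filter (fun j : Fin n => (j:ℕ) < (i:ℕ)), trm n S j) ≤
      ∑ j, trm n S j := Finset.sum_le_sum_of_subset (Finset.filter_subset _ _)
  have hins := sum_ins_le hn hS i
  have htg := trm_ge n S i
  obtain ⟨p, hp⟩ := spine_v hn hS (i:ℕ) hi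
  fin_cases a
  · show ∃ p : (SimpleGraph.fromEdgeSet (↑S : Set (Sym2 (Vtx n)))).Walk (sG n (npos0 hn)) (vG n ⟨(i:ℕ), hi⟩), (p.edges.map (c2G n)).sum ≤ Dval n S
    exact ⟨p, by rw [hp]; unfold Dval; omega⟩
  · show ∃ p : (SimpleGraph.fromEdgeSet (↑S : Set (Sym2 (Vtx n)))).Walk (sG n (npos0 hn)) (pG n i), (p.edges.map (c2G n)).sum ≤ Dval n S
    refine ⟨p.append (Walk.cons (adjS hn hS (vp_mem hn hS i) (ne_vp n i)) Walk.nil), ?_⟩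
    rw [Walk.edges_append, List.map_append, List.sum_append, hp]
    simp only [Walk.edges_cons, Walk.edges_nil, List.map_cons, List.map_nil, List.sum_cons,
      List.sum_nil, c2_vp]
    unfold Dval; omega
  · show ∃ p : (SimpleGraph.fromEdgeSet (↑S : Set (Sym2 (Vtx n)))).Walk (sG n (npos0 hn)) (wG n i), (p.edges.map (c2G n)).sum ≤ Dval n S
    obtain ⟨g, hg⟩ := gadget_walk hn hS i
    refine ⟨p.append g, ?_⟩
    rw [Walk.edges_append, List.map_append, List.sum_append, hp, hg]
    unfold Dval; omega

lemma st_walk :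
    ∃ p : (SimpleGraph.fromEdgeSet (↑S : Set (Sym2 (Vtx n)))).Walk
        (sG n (npos0 hn)) (tG n (npos0 hn)),
      (p.edges.map (c2G n)).sum = Dval n S := by
  obtain ⟨p, hp⟩ := spine_v hn hS (n-1) (by omega)
  obtain ⟨g, hg⟩ := gadget_walk hn hS ⟨n-1, by omega⟩
  show ∃ p : (SimpleGraph.fromEdgeSet (↑S : Set (Sym2 (Vtx n)))).Walk (sG n (npos0 hn)) (wG n ⟨n-1, by omega⟩), (p.edges.map (c2G n)).sum = Dval n S
  refine ⟨p.append g, ?_⟩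
  rw [Walk.edges_append, List.map_append, List.sum_append, hp, hg]
  have h1 : (∑ j ∈ insert (⟨n-1, by omega⟩ : Fin n)
      (Finset.univ.filter (fun j : Fin n => (j:ℕ) < n-1)), trm n S j) = ∑ i, trm n S i := by
    rw [filter_top n (npos0 hn)]
  rw [Finset.sum_insert (by simp)] at h1
  unfold Dval; omega

lemma wdist_S_st :
    wdist (↑S) (c2G n) (sG n (npos0 hn)) (tG n (npos0 hn)) = Dval n S := by
  obtain ⟨p, hp⟩ := st_walk hn hS
  apply le_antisymm
  · exact hp ▸ wdist_le_walk _ _ p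
  · have hne : (Set.range fun q : (SimpleGraph.fromEdgeSet (↑S : Set (Sym2 (Vtx n)))).Walk
        (sG n (npos0 hn)) (tG n (npos0 hn)) => (q.edges.map (c2G n)).sum).Nonempty :=
      ⟨_, ⟨p, rfl⟩⟩
    obtain ⟨q, hq⟩ := Nat.sInf_mem hne
    have hlb := walk_lb (↑S) (c2G n) (phi n S) (fun x y h => phi_edge hn hS x y h) q
    have hs : phi n S (sG n (npos0 hn)) = 0 := by
      have : phi n S (vG n ⟨0, npos0 hn⟩) = Pf n S 0 := phi_v n S _
      rw [show sG n (npos0 hn) = vG n ⟨0, npos0 hn⟩ from rfl, this]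
      unfold Pf; simp
    have ht : phi n S (tG n (npos0 hn)) = Dval n S := by
      have : phi n S (wG n ⟨n-1, by omega⟩) = Pf n S ((⟨n-1, by omega⟩ : Fin n) : ℕ) +
          trm n S ⟨n-1, by omega⟩ := phi_w n S _
      rw [show tG n (npos0 hn) = wG n ⟨n-1, by omega⟩ from rfl, this]
      exact_mod_cast Pf_last n (npos0 hn) S
    rw [hs, ht] at hlb
    rw [show |(0:ℤ) - (Dval n S : ℤ)| = (Dval n S : ℤ) from by
      rw [zero_sub, abs_neg, abs_of_nonneg (by positivity)]] at hlb
    rw [wdist, ← hq]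
    exact_mod_cast hlb

lemma wdist_le_2D (u v : Vtx n) :
    wdist (↑S) (c2G n) u v ≤ 2 * Dval n S := by
  obtain ⟨p, hp⟩ := reach hn hS u
  obtain ⟨q, hq⟩ := reach hn hS v
  refine le_trans (wdist_le_walk _ _ (p.reverse.append q)) ?_
  rw [Walk.edges_append, Walk.edges_reverse, List.map_append, List.map_reverse,
    List.sum_append, List.sum_reverse]
  omega

end WithS3

lemma wdist_E_st (n : ℕ) (hn : 2 ≤ n) :
    wdist ((Gn n).edgeSet) (c2G n) (sG n (npos0 hn)) (tG n (npos0 hn)) = 1 := by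
  have hadj : (SimpleGraph.fromEdgeSet ((Gn n).edgeSet)).Adj
      (sG n (npos0 hn)) (tG n (npos0 hn)) := by
    rw [SimpleGraph.fromEdgeSet_adj]
    exact ⟨mem_GnE n (ne_st n hn) (by rw [c2_st n hn]; omega), ne_st n hn⟩
  have hwalk : wdist ((Gn n).edgeSet) (c2G n) (sG n (npos0 hn)) (tG n (npos0 hn)) ≤ 1 := by
    refine le_trans (wdist_le_walk _ _ (Walk.cons hadj Walk.nil)) ?_
    simp [c2_st n hn]
  have hlow : 1 ≤ wdist ((Gn n).edgeSet) (c2G n) (sG n (npos0 hn)) (tG n (npos0 hn)) := by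
    have hne : (Set.range fun q : (SimpleGraph.fromEdgeSet ((Gn n).edgeSet)).Walk
        (sG n (npos0 hn)) (tG n (npos0 hn)) => (q.edges.map (c2G n)).sum).Nonempty :=
      ⟨_, ⟨Walk.cons hadj Walk.nil, rfl⟩⟩
    obtain ⟨q, hq⟩ := Nat.sInf_mem hne
    rw [wdist, ← hq]
    exact walk_weight_pos _ _ (GnE_sub n) (ne_st n hn) q
  omega

lemma npos {n : ℕ} (hn : 2 ≤ n) : 0 < n := by omega

lemma E_walk_cases (n : ℕ) (hn : 2 ≤ n) {u v : Vtx n} (hne : u ≠ v)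
    (q : (SimpleGraph.fromEdgeSet ((Gn n).edgeSet)).Walk u v)
    (hq : (q.edges.map (c2G n)).sum = 1) :
    (∃ (i : Fin n) (hi : (i:ℕ)+1 < n), s(u,v) = s(wG n i, vG n ⟨(i:ℕ)+1, hi⟩)) ∨
      s(u,v) = s(sG n (npos hn), tG n (npos hn)) := by
  cases q with
  | nil => exact absurd rfl hne
  | @cons a b c h q' =>
    cases q' with
    | nil =>
      rw [SimpleGraph.fromEdgeSet_adj] at h
      have hc2 : c2G n s(u,v) = 1 := by simpa using hq
      have hc2ne : c2G n s(u,v) ≠ 0 := GnE_sub n _ h.1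
      rcases classify n hn u v hc2ne with ⟨i, hi⟩ | ⟨i, hi⟩ | ⟨i, hi⟩ | h4 | h5
      · rw [hi, c2_vw] at hc2
        have := Nat.one_lt_two_pow (show (i:ℕ)+1 ≠ 0 by omega)
        omega
      · rw [hi, c2_vp] at hc2
        have := Nat.one_lt_two_pow (show (i:ℕ)+1 ≠ 0 by omega)
        omega
      · rw [hi, c2_pw] at hc2
        have := Nat.one_lt_two_pow (show (i:ℕ)+1 ≠ 0 by omega)
        omega
      · exact Or.inl h4
      · exact Or.inr h5
    | @cons b d c h' q'' =>
      exfalso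
      rw [SimpleGraph.fromEdgeSet_adj] at h h'
      have h1 := GnE_sub n _ h.1
      have h2 := GnE_sub n _ h'.1
      rw [Walk.edges_cons, Walk.edges_cons, List.map_cons, List.map_cons,
        List.sum_cons, List.sum_cons] at hq
      omega

lemma Dval_pos (n : ℕ) (hn : 2 ≤ n) (S : Finset (Sym2 (Vtx n))) : 1 ≤ Dval n S := by
  unfold Dval; omega

lemma ratio_le {n : ℕ} (hn : 2 ≤ n) {S : Finset (Sym2 (Vtx n))} (hS : memX n (npos0 hn) S)
    (u v : Vtx n) (hne : u ≠ v) :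
    (wdist (↑S) (c2G n) u v : ℚ) / (wdist ((Gn n).edgeSet) (c2G n) u v : ℚ) ≤
      (Dval n S : ℚ) := by
  by_cases h0 : wdist ((Gn n).edgeSet) (c2G n) u v = 0
  · rw [h0]; simp
  by_cases h1 : wdist ((Gn n).edgeSet) (c2G n) u v = 1
  · rw [h1]
    norm_num
    -- goal now in ℕ : wdist S ≤ Dval
    have hrne : (Set.range fun q : (SimpleGraph.fromEdgeSet ((Gn n).edgeSet)).Walk u v =>
        (q.edges.map (c2G n)).sum).Nonempty := by
      by_contra hc
      rw [Set.not_nonempty_iff_eq_empty] at hc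
      rw [wdist, hc, Nat.sInf_empty] at h1
      exact absurd h1 (by norm_num)
    obtain ⟨q, hq⟩ := Nat.sInf_mem hrne
    rw [← wdist, h1] at hq
    rcases E_walk_cases n hn hne q hq with ⟨i, hi, heq⟩ | heq
    · have hmem : s(u,v) ∈ S := heq ▸ h_mem hn hS i hi
      have hle : wdist (↑S) (c2G n) u v ≤ 1 := by
        refine le_trans (wdist_le_walk _ _ (Walk.cons (adjS hn hS hmem hne) Walk.nil)) ?_
        simp [heq, c2_h n i hi]
      exact le_trans hle (Dval_pos n hn S)
    · rw [Sym2.eq_iff] at heq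
      rcases heq with ⟨hu, hv⟩ | ⟨hu, hv⟩
      · subst hu; subst hv; rw [wdist_S_st hn hS]
      · subst hu; subst hv; rw [wdist_comm, wdist_S_st hn hS]
  · have h2 : 2 ≤ wdist ((Gn n).edgeSet) (c2G n) u v := by omega
    have hS2 : wdist (↑S) (c2G n) u v ≤ 2 * Dval n S := wdist_le_2D hn hS u v
    rw [div_le_iff₀ (by exact_mod_cast Nat.pos_of_ne_zero h0)]
    calc (wdist (↑S) (c2G n) u v : ℚ) ≤ 2 * Dval n S := by exact_mod_cast hS2
      _ = (Dval n S : ℚ) * 2 := by ring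
      _ ≤ (Dval n S : ℚ) * (wdist ((Gn n).edgeSet) (c2G n) u v : ℚ) := by
          have hc : (2:ℚ) ≤ (wdist ((Gn n).edgeSet) (c2G n) u v : ℚ) := by exact_mod_cast h2
          have hD0 : (0:ℚ) ≤ (Dval n S : ℚ) := by positivity
          exact mul_le_mul_of_nonneg_left hc hD0

/-- For `n ≥ 2` and a spanner `S ∈ X` of `G_n`, with
`T = { i : {v_i, w_i} ∈ S }`, one has `f1(S) = ∑_{i ∈ T} 2^i` and
`f2(S) = (n - 1) + ∑_{i ∈ T} 2^i + ∑_{i ∉ T} 2^(i+1)`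
(indices `i : Fin n` correspond to `i + 1 ∈ {1, …, n}` in the paper). -/
theorem objectives_of_memX (n : ℕ) (hn : 2 ≤ n) (S : Finset (Sym2 (Vtx n)))
    (hS : memX n (by omega) S) :
    f1 (c1G n) S =
        ∑ i ∈ Finset.univ.filter (fun i : Fin n => s(vG n i, wG n i) ∈ S),
          (2 : ℤ) ^ ((i : ℕ) + 1) ∧
      f2 (Gn n).edgeSet (↑S) (c2G n) =
        ((n : ℚ) - 1)
          + (∑ i ∈ Finset.univ.filter (fun i : Fin n => s(vG n i, wG n i) ∈ S),
              (2 : ℚ) ^ ((i : ℕ) + 1))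
          + ∑ i ∈ Finset.univ.filter (fun i : Fin n => s(vG n i, wG n i) ∉ S),
              (2 : ℚ) ^ ((i : ℕ) + 2) := by
  constructor
  · -- f1
    classical
    rw [f1, ← Finset.sum_filter_ne_zero]
    have himg : S.filter (fun e => c1G n e ≠ 0) =
        (Finset.univ.filter (fun i : Fin n => s(vG n i, wG n i) ∈ S)).image
          (fun i => s(vG n i, wG n i)) := by
      ext e
      induction e using Sym2.ind with
      | _ x y =>
        simp only [Finset.mem_filter, Finset.mem_image, Finset.mem_univ, true_and]
        constructor
        · rintro ⟨heS, hc1⟩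
          have hc2 : c2G n s(x,y) ≠ 0 := GnE_sub n _ (hS.1.1 heS)
          rcases classify n hn x y hc2 with ⟨i, hi⟩ | ⟨i, hi⟩ | ⟨i, hi⟩ | ⟨i, hlt, hi⟩ | hi
          · exact ⟨i, by rwa [hi] at heS, hi.symm⟩
          · rw [hi, c1_vp] at hc1; exact absurd rfl hc1
          · rw [hi, c1_pw] at hc1; exact absurd rfl hc1
          · rw [hi, c1_h] at hc1; exact absurd rfl hc1
          · rw [hi] at heS; exact absurd heS hS.2.2
        · rintro ⟨i, hiT, heq⟩
          rw [← heq]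
          exact ⟨hiT, by rw [c1_vw]; positivity⟩
    rw [himg, Finset.sum_image ?inj]
    case inj =>
      intro i _ j _ h
      rw [Sym2.eq_iff] at h
      rcases h with ⟨h1, _⟩ | ⟨h1, _⟩
      · exact congrArg Prod.fst h1
      · exact absurd (congrArg Prod.snd h1) (by simp [vG, wG])
    exact Finset.sum_congr rfl fun i _ => c1_vw n i
  · -- f2
    have hDQ : (Dval n S : ℚ) =
        ((n : ℚ) - 1)
          + (∑ i ∈ Finset.univ.filter (fun i : Fin n => s(vG n i, wG n i) ∈ S),
              (2 : ℚ) ^ ((i : ℕ) + 1))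
          + ∑ i ∈ Finset.univ.filter (fun i : Fin n => s(vG n i, wG n i) ∉ S),
              (2 : ℚ) ^ ((i : ℕ) + 2) := by
      have e0 : Dval n S = (n-1) +
          ((∑ i ∈ Finset.univ.filter (fun i : Fin n => s(vG n i, wG n i) ∈ S), 2^((i:ℕ)+1)) +
           (∑ i ∈ Finset.univ.filter (fun i : Fin n => ¬ s(vG n i, wG n i) ∈ S), 2^((i:ℕ)+2))) := by
        unfold Dval
        rw [← Finset.sum_filter_add_sum_filter_not Finset.univ
          (fun i : Fin n => s(vG n i, wG n i) ∈ S) (trm n S)]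
        congr 1
        congr 1
        · exact Finset.sum_congr rfl fun i hi => if_pos (Finset.mem_filter.mp hi).2
        · exact Finset.sum_congr rfl fun i hi => if_neg (Finset.mem_filter.mp hi).2
      rw [e0]
      push_cast [Nat.cast_sub (show 1 ≤ n by omega)]
      ring
    rw [← hDQ]
    unfold f2
    split
    case isFalse h =>
      refine absurd ⟨(sG n (npos hn), tG n (npos hn)), ?_⟩ h
      simp only [Finset.mem_filter]
      exact ⟨Finset.mem_univ _, ne_st n hn⟩
    case isTrue h =>
      apply le_antisymm
      · refine Finset.sup'_le _ _ fun p hp => ?_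
        simp only [Finset.mem_filter] at hp
        exact ratio_le hn hS p.1 p.2 hp.2
      · calc (Dval n S : ℚ) =
            (wdist (↑S) (c2G n) (sG n (npos hn)) (tG n (npos hn)) : ℚ) /
              (wdist ((Gn n).edgeSet) (c2G n) (sG n (npos hn)) (tG n (npos hn)) : ℚ) := by
              rw [wdist_S_st hn hS, wdist_E_st n hn]; simp
          _ ≤ _ := Finset.le_sup'
            (f := fun p : Vtx n × Vtx n => (wdist (↑S) (c2G n) p.1 p.2 : ℚ) /
              (wdist ((Gn n).edgeSet) (c2G n) p.1 p.2 : ℚ))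
            (b := (sG n (npos hn), tG n (npos hn)))
            (by simp only [Finset.mem_filter]; exact ⟨Finset.mem_univ _, ne_st n hn⟩)
end Helpers
end MSpPaper
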